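/- For any Somos 5 sequence τ over a field K with coefficients α, β, the quantity J(n) = τ(n+1)·τ(n−2)/(τ(n)·τ(n−1)) + τ(n+2)·τ(n−1)/(τ(n+1)·τ(n)) + α·(τ(n)·τ(n−1)/(τ(n+1)·τ(n−2)) + τ(n+1)·τ(n)/(τ(n+2)·τ(n−1))) + β·τ(n)^2/(τ(n+2)·τ(n−2)) is independent of n, i.e. J(m) = J(n) for all m, n ∈ ℤ. -/

import Mathlib

private lemma somos5_key {K : Type*} [Field K] (α β a b c d e f : K)
    (ha : a ≠ 0) (hb : b ≠ 0) (hc : c ≠ 0) (hd : d ≠ 0) (he : e ≠ 0) (hf : f ≠ 0)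
    (h : f * a = α * (e * b) + β * (d * c)) :
    e * b / (d * c) + f * c / (e * d) + α * (d * c / (e * b) + e * d / (f * c))
      + β * d ^ 2 / (f * b)
    = d * a / (c * b) + e * b / (d * c) + α * (c * b / (d * a) + d * c / (e * b))
      + β * c ^ 2 / (e * a) := by
  field_simp
  linear_combination (b*c^2*f - a*d^2*e) * h

private def somosJ {K : Type*} [Field K] (α β : K) (τ : ℤ → K) (n : ℤ) : K :=
  τ (n + 1) * τ (n - 2) / (τ n * τ (n - 1))
    + τ (n + 2) * τ (n - 1) / (τ (n + 1) * τ n)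
    + α * (τ n * τ (n - 1) / (τ (n + 1) * τ (n - 2))
        + τ (n + 1) * τ n / (τ (n + 2) * τ (n - 1)))
    + β * (τ n) ^ 2 / (τ (n + 2) * τ (n - 2))

private lemma somosJ_step {K : Type*} [Field K] (α β : K) (τ : ℤ → K)
    (hτ : ∀ n : ℤ, τ n ≠ 0)
    (hrec : ∀ n : ℤ,
      τ (n + 5) * τ n = α * (τ (n + 4) * τ (n + 1)) + β * (τ (n + 3) * τ (n + 2)))
    (n : ℤ) : somosJ α β τ (n + 1) = somosJ α β τ n := by
  have h := hrec (n - 2)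
  rw [show n - 2 + 5 = n + 3 by ring, show n - 2 + 4 = n + 2 by ring,
      show n - 2 + 1 = n - 1 by ring, show n - 2 + 3 = n + 1 by ring,
      show n - 2 + 2 = n by ring] at h
  have key := somos5_key α β (τ (n-2)) (τ (n-1)) (τ n) (τ (n+1)) (τ (n+2)) (τ (n+3))
    (hτ _) (hτ _) (hτ _) (hτ _) (hτ _) (hτ _) h
  unfold somosJ
  rw [show n + 1 + 1 = n + 2 by ring, show n + 1 - 2 = n - 1 by ring,
      show n + 1 - 1 = n by ring, show n + 1 + 2 = n + 3 by ring]
  exact key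

private lemma somosJ_zero {K : Type*} [Field K] (α β : K) (τ : ℤ → K)
    (hτ : ∀ n : ℤ, τ n ≠ 0)
    (hrec : ∀ n : ℤ,
      τ (n + 5) * τ n = α * (τ (n + 4) * τ (n + 1)) + β * (τ (n + 3) * τ (n + 2))) :
    ∀ n : ℤ, somosJ α β τ n = somosJ α β τ 0 := by
  intro n
  induction n using Int.induction_on with
  | zero => rfl
  | succ k ih => rw [somosJ_step α β τ hτ hrec k]; exact ih
  | pred k ih =>
    have h := somosJ_step α β τ hτ hrec (-(k:ℤ) - 1)
    rw [show -(k:ℤ) - 1 + 1 = -k by ring] at h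
    rw [← h]; exact ih

/-- The invariant `J` of a Somos 5 sequence is independent of `n`. -/
theorem somos5_translation_invariant {K : Type*} [Field K] (α β : K) (τ : ℤ → K)
    (hτ : ∀ n : ℤ, τ n ≠ 0)
    (hrec : ∀ n : ℤ,
      τ (n + 5) * τ n = α * (τ (n + 4) * τ (n + 1)) + β * (τ (n + 3) * τ (n + 2))) :
    ∀ m n : ℤ,
      (τ (m + 1) * τ (m - 2) / (τ m * τ (m - 1))
        + τ (m + 2) * τ (m - 1) / (τ (m + 1) * τ m)
        + α * (τ m * τ (m - 1) / (τ (m + 1) * τ (m - 2))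
            + τ (m + 1) * τ m / (τ (m + 2) * τ (m - 1)))
        + β * (τ m) ^ 2 / (τ (m + 2) * τ (m - 2)))
      = (τ (n + 1) * τ (n - 2) / (τ n * τ (n - 1))
        + τ (n + 2) * τ (n - 1) / (τ (n + 1) * τ n)
        + α * (τ n * τ (n - 1) / (τ (n + 1) * τ (n - 2))
            + τ (n + 1) * τ n / (τ (n + 2) * τ (n - 1)))
        + β * (τ n) ^ 2 / (τ (n + 2) * τ (n - 2))) := by
  intro m n
  exact (somosJ_zero α β τ hτ hrec m).trans (somosJ_zero α β τ hτ hrec n).symm
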